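/- In the assurance game, the Perfect Prediction Equilibrium outcome is o₄ with payoffs (1,1), whereas the backward-induction (subgame perfect) outcome is o₁ with payoffs (0,0); hence the PPE outcome strictly Pareto-dominates the SPE outcome. -/

import Mathlib

open Classical

/-- A finite two-player extensive-form game tree with perfect information:
leaves carry a pair of payoffs (Peter's, Mary's); internal nodes carry the
player to move (`true` = Peter, `false` = Mary) and a list of children. -/
inductive GameTree where
  | leaf (pP pM : ℤ) : GameTree
  | node (player : Bool) (children : List GameTree) : GameTree

namespace GameTree

/-- The list of outcomes (leaf payoff pairs) of a game tree. -/
def outcomes : GameTree → List (ℤ × ℤ)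
  | .leaf p m => [(p, m)]
  | .node _ ts => ts.attach.flatMap (fun t => outcomes t.1)
decreasing_by
  have := List.sizeOf_lt_of_mem t.2
  simp only [GameTree.node.sizeOf_spec]
  omega

/-- The payoff of a given player at an outcome. -/
def payOf (pl : Bool) (o : ℤ × ℤ) : ℤ := if pl then o.1 else o.2

/-- Every internal node has a nonempty list of children. -/
def WellFormed : GameTree → Prop
  | .leaf _ _ => True
  | .node _ ts => ts ≠ [] ∧ ∀ t ∈ ts.attach, WellFormed t.1
decreasing_by
  have := List.sizeOf_lt_of_mem t.2
  simp only [GameTree.node.sizeOf_spec]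
  omega

/-- Strict preferences: each player's payoffs at the outcomes are pairwise
distinct. -/
def StrictPref (g : GameTree) : Prop :=
  (g.outcomes.map Prod.fst).Nodup ∧ (g.outcomes.map Prod.snd).Nodup

/-- Target set of a Newcombian State (a list of children subtrees) with respect
to the current player's payoff `pay` and the remaining-outcome set `I`. -/
noncomputable def target (pay : ℤ × ℤ → ℤ) (I : Finset (ℤ × ℤ)) :
    List GameTree → Finset (ℤ × ℤ)
  | [] => ∅
  | [t] => I ∩ t.outcomes.toFinset
  | t :: u :: p =>
      let Tp := target pay I (u :: p)
      (I ∩ t.outcomes.toFinset).filter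
        (fun o => ¬ (Tp.Nonempty ∧ ∀ o' ∈ Tp, pay o < pay o'))

/-- `o` is discarded by some Newcombian State at a node with children `ts`,
remaining set `I` and current-player payoff `pay`. -/
def Discards (pay : ℤ × ℤ → ℤ) (ts : List GameTree) (I : Finset (ℤ × ℤ))
    (o : ℤ × ℤ) : Prop :=
  ∃ η : List GameTree, η ≠ [] ∧ (∀ t ∈ η, t ∈ ts) ∧ η.Chain' (· ≠ ·) ∧
    o ∈ I ∧ (∀ t ∈ η.head?, o ∉ t.outcomes.toFinset) ∧
    (target pay I η).Nonempty ∧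
    ∀ o' ∈ target pay I η, pay o < pay o'

/-- The set of outcomes surviving all Newcombian-State discardings at a node. -/
noncomputable def survivors (pay : ℤ × ℤ → ℤ) (ts : List GameTree)
    (I : Finset (ℤ × ℤ)) : Finset (ℤ × ℤ) :=
  I.filter (fun o => ¬ Discards pay ts I o)

/-- The Perfect Prediction Equilibrium construction: starting from the root
with remaining set `I`, at each node discard all outcomes discarded by some
Newcombian State, then move to the unique child whose outcomes contain all
remaining outcomes; the reached leaf is the PPE outcome. -/
inductive PPEReach : GameTree → Finset (ℤ × ℤ) → (ℤ × ℤ) → Prop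
  | leaf (p m : ℤ) (I : Finset (ℤ × ℤ)) (h : (p, m) ∈ I) :
      PPEReach (.leaf p m) I (p, m)
  | node (pl : Bool) (ts : List GameTree) (I : Finset (ℤ × ℤ))
      (t : GameTree) (o : ℤ × ℤ) (ht : t ∈ ts)
      (hsub : survivors (payOf pl) ts I ⊆ t.outcomes.toFinset)
      (hrec : PPEReach t (survivors (payOf pl) ts I) o) :
      PPEReach (.node pl ts) I o

/-- Backward induction (Subgame Perfect Equilibrium) outcome: at each node the
current player moves to the child whose backward-induction outcome maximizes
her payoff. -/
noncomputable def biOutcome : GameTree → ℤ × ℤ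
  | .leaf p m => (p, m)
  | .node pl ts =>
      ((ts.attach.map (fun t => biOutcome t.1)).argmax (payOf pl)).getD (0, 0)
decreasing_by
  have := List.sizeOf_lt_of_mem t.2
  simp only [GameTree.node.sizeOf_spec]
  omega

end GameTree

/-- The assurance game: Peter chooses between o₁ = (0,0) and node n₂, at which
Mary chooses between o₃ = (-1,2) and o₄ = (1,1). -/
def assurance : GameTree :=
  .node true [.leaf 0 0, .node false [.leaf (-1) 2, .leaf 1 1]]

namespace GameTree

lemma target_subset (pay : ℤ×ℤ→ℤ) (I : Finset (ℤ×ℤ)) (t : GameTree) (p : List GameTree) :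
    target pay I (t :: p) ⊆ I ∩ t.outcomes.toFinset := by
  cases p with
  | nil => simp [target]
  | cons u q => exact Finset.filter_subset _ _

end GameTree

section Aux
open GameTree

noncomputable def L0 : GameTree := .leaf 0 0
noncomputable def n2 : GameTree := .node false [.leaf (-1) 2, .leaf 1 1]
noncomputable def I0 : Finset (ℤ×ℤ) := {(0,0),(-1,2),(1,1)}

lemma out_ass : assurance.outcomes = [(0,0),(-1,2),(1,1)] := by
  simp [assurance, outcomes]

lemma out_n2 : n2.outcomes = [(-1,2),(1,1)] := by
  simp [n2, outcomes]

lemma out_L0 : L0.outcomes = [(0,0)] := by simp [L0, outcomes]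

lemma tgt_L0 : target (payOf true) I0 [L0] = {(0,0)} := by
  ext o
  simp [target, out_L0, I0]

lemma tgt_n2L0 : target (payOf true) I0 [n2, L0] = {(1,1)} := by
  ext o
  rw [show (target (payOf true) I0 [n2, L0]) =
    (I0 ∩ n2.outcomes.toFinset).filter
      (fun o => ¬ ((target (payOf true) I0 [L0]).Nonempty ∧
        ∀ o' ∈ target (payOf true) I0 [L0], payOf true o < payOf true o')) from rfl]
  rw [tgt_L0]
  simp [out_n2, I0, payOf]
  constructor
  · rintro ⟨h | h, h2⟩
    · subst h; norm_num at h2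
    · exact h
  · rintro rfl; exact ⟨Or.inr rfl, by norm_num⟩

lemma surv_root : survivors (payOf true) [L0, n2] I0 = {(1,1)} := by
  ext o
  simp only [survivors, Finset.mem_filter, Finset.mem_singleton]
  constructor
  · rintro ⟨hI, hnd⟩
    simp only [I0, Finset.mem_insert, Finset.mem_singleton] at hI
    rcases hI with rfl | rfl | rfl
    · exact absurd ⟨[n2, L0], by simp, by simp, by simp [List.Chain', n2, L0],
        by simp [I0], by simp [out_n2, Prod.ext_iff],
        by rw [tgt_n2L0]; exact ⟨(1,1), Finset.mem_singleton_self _⟩,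
        by rw [tgt_n2L0]; intro o' h; rw [Finset.mem_singleton] at h; subst h
           norm_num [payOf]⟩ hnd
    · exact absurd ⟨[L0], by simp, by simp, by simp [List.Chain'],
        by simp [I0], by simp [out_L0],
        by rw [tgt_L0]; exact ⟨(0,0), Finset.mem_singleton_self _⟩,
        by rw [tgt_L0]; intro o' h; rw [Finset.mem_singleton] at h; subst h
           norm_num [payOf]⟩ hnd
    · rfl
  · rintro rfl
    refine ⟨by simp [I0], ?_⟩
    rintro ⟨η, hne, hmem, hch, hI, hhead, ⟨x, hx⟩, hlt⟩
    cases η with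
    | nil => exact hne rfl
    | cons t p =>
      have ht : t = L0 ∨ t = n2 := by
        have := hmem t (by simp)
        simpa using this
      have hh := hhead t rfl
      rcases ht with rfl | rfl
      · have hx' := target_subset _ _ _ p hx
        simp only [out_L0, I0] at hx'
        have hx0 : x = (0, 0) := by
          have := Finset.mem_inter.mp hx'
          simpa using this.2
        subst hx0
        have := hlt _ hx
        norm_num [payOf] at this
      · simp [out_n2] at hh

lemma surv_n2 : survivors (payOf false) [.leaf (-1) 2, .leaf 1 1] ({(1,1)} : Finset (ℤ×ℤ)) = {(1,1)} := by
  ext o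
  simp only [survivors, Finset.mem_filter, Finset.mem_singleton]
  constructor
  · rintro ⟨hI, _⟩; simpa using hI
  · rintro rfl
    refine ⟨by simp, ?_⟩
    rintro ⟨η, hne, hmem, hch, hI, hhead, ⟨x, hx⟩, hlt⟩
    cases η with
    | nil => exact hne rfl
    | cons t p =>
      have ht : t = GameTree.leaf (-1) 2 ∨ t = GameTree.leaf 1 1 := by
        have := hmem t (by simp); simpa using this
      have hh := hhead t rfl
      rcases ht with rfl | rfl
      · have hx' := target_subset _ _ _ p hx
        have := Finset.mem_inter.mp hx'
        have h1 : x = (1, 1) := by simpa using this.1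
        have h2 : x = (-1, 2) := by simpa [outcomes] using this.2
        rw [h1] at h2
        simp [Prod.ext_iff] at h2
      · simp [outcomes] at hh

end Aux
/-- in the assurance game, the PPE outcome is o₄ = (1,1) while
the backward-induction (SPE) outcome is o₁ = (0,0); the PPE outcome strictly
Pareto-dominates the SPE outcome. -/
theorem assurance_ppe_vs_spe :
    GameTree.PPEReach assurance assurance.outcomes.toFinset (1, 1) ∧
    assurance.biOutcome = (0, 0) ∧
    (((0, 0) : ℤ × ℤ).1 < ((1, 1) : ℤ × ℤ).1 ∧
     ((0, 0) : ℤ × ℤ).2 < ((1, 1) : ℤ × ℤ).2) := by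
  refine ⟨?_, ?_, by norm_num⟩
  · have hI : assurance.outcomes.toFinset = I0 := by
      rw [out_ass]; ext o; simp [I0]
    rw [hI]
    have hA : assurance = .node true [L0, n2] := rfl
    rw [hA]
    refine GameTree.PPEReach.node true [L0, n2] I0 n2 (1,1) (by simp) ?_ ?_
    · rw [surv_root, out_n2]; intro o ho
      rw [Finset.mem_singleton] at ho; subst ho; simp
    · rw [surv_root]
      have hn2 : n2 = .node false [.leaf (-1) 2, .leaf 1 1] := rfl
      rw [hn2]
      refine GameTree.PPEReach.node false _ _ (.leaf 1 1) (1,1) (by simp) ?_ ?_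
      · rw [surv_n2]; intro o ho
        rw [Finset.mem_singleton] at ho; subst ho
        simp [GameTree.outcomes]
      · rw [surv_n2]; exact GameTree.PPEReach.leaf 1 1 _ (by simp)
  · simp [assurance, GameTree.biOutcome, GameTree.payOf, List.argmax, List.argAux]
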